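/- Let n ≥ 2 and let a_1,…,a_n ∈ {0,1}^d be pairwise distinct. Suppose α* ∈ ℝ^n with α*_i ≥ 0 is feasible (i.e., Σ_{j=1}^n α*_j k(a_i,a_j) ≥ 1 for all i) and attains the minimum value val(A) of the SVM problem. Then for every i ∈ {1,…,n} it holds that 1/2 ≤ α*_i ≤ n. -/

import Mathlib

open Finset

/-- The Gaussian kernel with parameter `C = 100 ln n`. -/
noncomputable def gaussK (n d : ℕ) (x y : Fin d → ℝ) : ℝ :=
  Real.exp (-(100 * Real.log n) * ∑ l, (x l - y l) ^ 2)

/-- `val(A)`: the optimal value of the hard-margin SVM (without bias) on the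
points `a_1, …, a_n`, all with label `+1`. -/
noncomputable def svmVal (n d : ℕ) (a : Fin n → Fin d → ℝ) : ℝ :=
  sInf {v : ℝ | ∃ α : Fin n → ℝ, (∀ i, 0 ≤ α i) ∧
    (∀ i, 1 ≤ ∑ j, α j * gaussK n d (a i) (a j)) ∧
    v = (1 / 2) * ∑ i, ∑ j, α i * α j * gaussK n d (a i) (a j)}

set_option maxHeartbeats 1000000 in
/-- Any feasible minimizer `α*` of the SVM problem on pairwise distinct binary
vectors satisfies `1/2 ≤ α*_i ≤ n` for every `i`. -/
theorem svm_minimizer_bounded (n d : ℕ) (hn : 2 ≤ n)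
    (a : Fin n → Fin d → ℝ)
    (ha01 : ∀ i l, a i l = 0 ∨ a i l = 1)
    (hainj : Function.Injective a)
    (αs : Fin n → ℝ) (hpos : ∀ i, 0 ≤ αs i)
    (hfeas : ∀ i, 1 ≤ ∑ j, αs j * gaussK n d (a i) (a j))
    (hopt : (1 / 2) * ∑ i, ∑ j, αs i * αs j * gaussK n d (a i) (a j) = svmVal n d a) :
    ∀ i, 1 / 2 ≤ αs i ∧ αs i ≤ (n : ℝ) := by
  have hn1 : (1:ℝ) ≤ n := by exact_mod_cast Nat.one_le_of_lt hn
  have hn2 : (2:ℝ) ≤ n := by exact_mod_cast hn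
  have hn0 : (0:ℝ) < n := by linarith
  have hkpos : ∀ x y : Fin d → ℝ, 0 < gaussK n d x y := fun x y => Real.exp_pos _
  have hkself : ∀ i, gaussK n d (a i) (a i) = 1 := by
    intro i
    unfold gaussK
    simp
  have hksmall : ∀ i j, i ≠ j → gaussK n d (a i) (a j) ≤ 1 / (n:ℝ)^4 := by
    intro i j hij
    have hne : a i ≠ a j := fun h => hij (hainj h)
    obtain ⟨l, hl⟩ := Function.ne_iff.mp hne
    have h1 : (a i l - a j l)^2 = 1 := by
      rcases ha01 i l with h|h <;> rcases ha01 j l with h'|h' <;>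
        rw [h, h'] at hl ⊢ <;> (norm_num at hl) <;> norm_num
    have hdist : (1:ℝ) ≤ ∑ l, (a i l - a j l)^2 := by
      calc (1:ℝ) = (a i l - a j l)^2 := h1.symm
        _ ≤ ∑ l, (a i l - a j l)^2 :=
          Finset.single_le_sum (f := fun l => (a i l - a j l)^2)
            (fun _ _ => sq_nonneg _) (mem_univ l)
    have hlog : 0 ≤ Real.log n := Real.log_nonneg hn1
    unfold gaussK
    have hexp : -(100 * Real.log n) * ∑ l, (a i l - a j l)^2 ≤ -(4 * Real.log n) := by
      nlinarith
    calc Real.exp (-(100 * Real.log n) * ∑ l, (a i l - a j l)^2)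
        ≤ Real.exp (-(4 * Real.log n)) := Real.exp_le_exp.mpr hexp
      _ = 1 / (n:ℝ)^4 := by
          rw [Real.exp_neg, show (4:ℝ) * Real.log n = Real.log ((n:ℝ)^4) by
            rw [Real.log_pow]; push_cast; ring, Real.exp_log (by positivity)]
          rw [one_div]
  set ε : ℝ := 1 / (n:ℝ)^4 with hε
  have hε0 : 0 ≤ ε := by positivity
  have hεn : ε * (n:ℝ)^2 ≤ 1/4 := by
    rw [hε, div_mul_eq_mul_div, one_mul, div_le_div_iff₀ (by positivity) (by norm_num)]
    have h4 : (4:ℝ) ≤ (n:ℝ)^2 := by nlinarith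
    nlinarith [h4, sq_nonneg ((n:ℝ)^2 - 4)]
  -- the feasible set and its properties
  set S : Set ℝ := {v : ℝ | ∃ α : Fin n → ℝ, (∀ i, 0 ≤ α i) ∧
    (∀ i, 1 ≤ ∑ j, α j * gaussK n d (a i) (a j)) ∧
    v = (1 / 2) * ∑ i, ∑ j, α i * α j * gaussK n d (a i) (a j)} with hSdef
  have hvalS : svmVal n d a = sInf S := rfl
  have hbdd : BddBelow S := by
    refine ⟨0, ?_⟩
    rintro v ⟨β, hβ, -, rfl⟩
    have h0 : 0 ≤ ∑ i, ∑ j, β i * β j * gaussK n d (a i) (a j) :=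
      Finset.sum_nonneg fun i _ => Finset.sum_nonneg fun j _ =>
        mul_nonneg (mul_nonneg (hβ i) (hβ j)) (hkpos _ _).le
    linarith
  have hfeas1 : ∀ i, 1 ≤ ∑ j, (1:ℝ) * gaussK n d (a i) (a j) := by
    intro i
    have h := Finset.single_le_sum
      (f := fun j => (1:ℝ) * gaussK n d (a i) (a j))
      (fun j _ => by simpa using (hkpos (a i) (a j)).le) (mem_univ i)
    simpa [hkself i] using h
  have hmem : (1/2) * ∑ i, ∑ j, (1:ℝ) * (1:ℝ) * gaussK n d (a i) (a j) ∈ S :=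
    ⟨fun _ => 1, fun _ => zero_le_one, hfeas1, rfl⟩
  have hle : svmVal n d a ≤ (1/2) * ∑ i, ∑ j, (1:ℝ) * (1:ℝ) * gaussK n d (a i) (a j) := by
    rw [hvalS]; exact csInf_le hbdd hmem
  -- bound on the all-ones objective
  have hrow : ∀ i0, ∑ j, gaussK n d (a i0) (a j) ≤ 1 + (n:ℝ) * ε := by
    intro i0
    rw [← Finset.sum_erase_add _ _ (mem_univ i0), hkself]
    have h1 : ∑ j ∈ univ.erase i0, gaussK n d (a i0) (a j)
        ≤ ∑ _j ∈ univ.erase i0, ε :=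
      Finset.sum_le_sum fun j hj => hksmall i0 j (Finset.ne_of_mem_erase hj).symm
    have h2 : ∑ _j ∈ univ.erase i0, ε = ((univ.erase i0).card : ℝ) * ε := by
      rw [Finset.sum_const, nsmul_eq_mul]
    have h3 : ((univ.erase i0).card : ℝ) ≤ (n:ℝ) := by
      have : (univ.erase i0).card ≤ n := by
        calc (univ.erase i0).card ≤ (univ : Finset (Fin n)).card := card_le_card (erase_subset _ _)
          _ = n := by simp
      exact_mod_cast this
    have h4 : ((univ.erase i0).card : ℝ) * ε ≤ (n:ℝ) * ε :=
      mul_le_mul_of_nonneg_right h3 hε0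
    linarith
  have hones : ∑ i, ∑ j, gaussK n d (a i) (a j) ≤ (n:ℝ) * (1 + (n:ℝ) * ε) := by
    calc ∑ i, ∑ j, gaussK n d (a i) (a j) ≤ ∑ _i : Fin n, (1 + (n:ℝ) * ε) :=
        Finset.sum_le_sum fun i _ => hrow i
      _ = (n:ℝ) * (1 + (n:ℝ) * ε) := by rw [Finset.sum_const, nsmul_eq_mul]; simp
  have honesval : (1/2) * ∑ i, ∑ j, (1:ℝ) * (1:ℝ) * gaussK n d (a i) (a j)
      ≤ (1/2) * ((n:ℝ) + 1) := by
    have : ∑ i, ∑ j, (1:ℝ) * (1:ℝ) * gaussK n d (a i) (a j)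
        = ∑ i, ∑ j, gaussK n d (a i) (a j) := by simp
    rw [this]
    nlinarith [hones]
  have hobj_le : (1 / 2) * ∑ i, ∑ j, αs i * αs j * gaussK n d (a i) (a j)
      ≤ (1/2) * ((n:ℝ) + 1) := by
    rw [hopt]; linarith
  -- diagonal lower bound on objective, giving upper bound on each αs
  have hub : ∀ i, αs i ≤ (n:ℝ) := by
    intro i
    have h1 : αs i * αs i * gaussK n d (a i) (a i)
        ≤ ∑ j, αs i * αs j * gaussK n d (a i) (a j) :=
      Finset.single_le_sum
        (f := fun j => αs i * αs j * gaussK n d (a i) (a j))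
        (fun j _ => mul_nonneg (mul_nonneg (hpos i) (hpos j)) (hkpos _ _).le)
        (mem_univ i)
    have h2 : ∑ j, αs i * αs j * gaussK n d (a i) (a j)
        ≤ ∑ i', ∑ j, αs i' * αs j * gaussK n d (a i') (a j) :=
      Finset.single_le_sum
        (f := fun i' => ∑ j, αs i' * αs j * gaussK n d (a i') (a j))
        (fun i' _ => Finset.sum_nonneg fun j _ =>
          mul_nonneg (mul_nonneg (hpos i') (hpos j)) (hkpos _ _).le)
        (mem_univ i)
    rw [hkself i, mul_one] at h1
    nlinarith [hpos i]
  intro i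
  refine ⟨?_, hub i⟩
  -- lower bound from feasibility
  have h := hfeas i
  rw [← Finset.sum_erase_add _ _ (mem_univ i), hkself i, mul_one] at h
  have htail : ∑ j ∈ univ.erase i, αs j * gaussK n d (a i) (a j)
      ≤ ((univ.erase i).card : ℝ) * ((n:ℝ) * ε) := by
    rw [← nsmul_eq_mul, ← Finset.sum_const]
    refine Finset.sum_le_sum fun j hj => ?_
    exact mul_le_mul (hub j) (hksmall i j (Finset.ne_of_mem_erase hj).symm)
      (hkpos _ _).le (le_trans (hpos j) (hub j))
  have hcard : ((univ.erase i).card : ℝ) ≤ (n:ℝ) := by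
    have : (univ.erase i).card ≤ n := by
      calc (univ.erase i).card ≤ (univ : Finset (Fin n)).card := card_le_card (erase_subset _ _)
        _ = n := by simp
    exact_mod_cast this
  have hnε : 0 ≤ (n:ℝ) * ε := by positivity
  have htail2 : ∑ j ∈ univ.erase i, αs j * gaussK n d (a i) (a j) ≤ (n:ℝ)^2 * ε := by
    calc ∑ j ∈ univ.erase i, αs j * gaussK n d (a i) (a j)
        ≤ ((univ.erase i).card : ℝ) * ((n:ℝ) * ε) := htail
      _ ≤ (n:ℝ) * ((n:ℝ) * ε) := mul_le_mul_of_nonneg_right hcard hnε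
      _ = (n:ℝ)^2 * ε := by ring
  nlinarith [htail2, hεn]
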